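/- Let m' be an odd positive integer, let m = 2m', and let n ≥ 1. Suppose f : G → ZMod m is an (m,n)-generalized bent function such that (f x).val is even for every x ∈ G. Then the function g : G → ZMod m' defined by g x = (((f x).val)/2 : ZMod m') is an (m',n)-generalized bent function. -/

import Mathlib

/-- The primitive complex `m`-th root of unity `exp(2πi/m)`. -/
noncomputable def zetaC (m : ℕ) : ℂ := Complex.exp (2 * Real.pi * Complex.I / m)

/-- `f : (Fin n → ZMod 2) → ZMod m` is an `(m,n)`-generalized bent function if
`|∑_x ζ_m^{f x} (-1)^{y·x}|² = 2^n` for all `y`. -/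
noncomputable def IsGBF (m n : ℕ) (f : (Fin n → ZMod 2) → ZMod m) : Prop :=
  ∀ y : Fin n → ZMod 2,
    ‖∑ x : Fin n → ZMod 2,
      zetaC m ^ (f x).val * (-1 : ℂ) ^ (∑ i : Fin n, (y i).val * (x i).val)‖ ^ 2
      = (2 : ℝ) ^ n

lemma zetaC_pow_self (m : ℕ) (hm : 0 < m) : zetaC m ^ m = 1 := by
  rw [zetaC, ← Complex.exp_nat_mul]
  have hm' : (m : ℂ) ≠ 0 := Nat.cast_ne_zero.mpr hm.ne'
  rw [mul_div_cancel₀ _ hm', Complex.exp_eq_one_iff]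
  exact ⟨1, by ring⟩

lemma zetaC_sq (m' : ℕ) (hm' : 0 < m') : zetaC (2 * m') ^ 2 = zetaC m' := by
  rw [zetaC, zetaC, ← Complex.exp_nat_mul]
  congr 1
  have h : (m' : ℂ) ≠ 0 := Nat.cast_ne_zero.mpr hm'.ne'
  push_cast
  field_simp

theorem stmt_1 (m' n : ℕ) (hm' : 0 < m') (hodd : Odd m') (hn : 1 ≤ n)
    (f : (Fin n → ZMod 2) → ZMod (2 * m')) (hf : IsGBF (2 * m') n f)
    (heven : ∀ x, Even (f x).val) :
    IsGBF m' n (fun x => (((f x).val / 2 : ℕ) : ZMod m')) := by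
  intro y
  have key : ∀ x, zetaC m' ^ ((((f x).val / 2 : ℕ) : ZMod m')).val
      = zetaC (2 * m') ^ (f x).val := by
    intro x
    have h1 : zetaC m' ^ ((((f x).val / 2 : ℕ) : ZMod m')).val
        = zetaC m' ^ ((f x).val / 2) := by
      haveI : NeZero m' := ⟨hm'.ne'⟩
      rw [ZMod.val_natCast, ← pow_eq_pow_mod _ (zetaC_pow_self m' hm')]
    rw [h1, ← zetaC_sq m' hm', ← pow_mul]
    congr 1
    obtain ⟨k, hk⟩ := heven x
    omega
  rw [show (∑ x : Fin n → ZMod 2,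
      zetaC m' ^ ((((f x).val / 2 : ℕ) : ZMod m')).val *
        (-1 : ℂ) ^ (∑ i : Fin n, (y i).val * (x i).val))
      = ∑ x : Fin n → ZMod 2,
      zetaC (2 * m') ^ (f x).val * (-1 : ℂ) ^ (∑ i : Fin n, (y i).val * (x i).val)
    from Finset.sum_congr rfl fun x _ => by rw [key x]]
  exact hf y
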